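/- Let (D, ⊑) be a finite partial order with a least element ⊥, and let f₁, …, f_k be inflationary and monotonic functions from D to D. Let g := f_k ∘ ⋯ ∘ f₁ be their composition. Then there exists n such that gⁿ(⊥) is a fixpoint of g, and moreover gⁿ(⊥) is the least common fixpoint of {f₁, …, f_k}: each fᵢ fixes gⁿ(⊥), and gⁿ(⊥) ⊑ e for every e fixed by all the fᵢ. -/

import Mathlib

private lemma foldl_infl {D : Type*} [PartialOrder D] :
    ∀ (L : List (D → D)), (∀ h ∈ L, ∀ x : D, x ≤ h x) →
      ∀ d : D, d ≤ L.foldl (fun x h => h x) d := by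
  intro L
  induction L with
  | nil => intro _ d; simp
  | cons h t ih =>
    intro hL d
    simp only [List.foldl_cons]
    exact le_trans (hL h (List.mem_cons_self (a := h) (l := t)) d)
      (ih (fun h' hh' x => hL h' (List.mem_cons_of_mem _ hh') x) (h d))

private lemma foldl_mono {D : Type*} [PartialOrder D] :
    ∀ (L : List (D → D)), (∀ h ∈ L, ∀ x y : D, x ≤ y → h x ≤ h y) →
      ∀ d e : D, d ≤ e → L.foldl (fun x h => h x) d ≤ L.foldl (fun x h => h x) e := by
  intro L
  induction L with
  | nil => intro _ d e hde; simpa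
  | cons h t ih =>
    intro hL d e hde
    simp only [List.foldl_cons]
    exact ih (fun h' hh' x y => hL h' (List.mem_cons_of_mem _ hh') x y) _ _
      (hL h (List.mem_cons_self (a := h) (l := t)) d e hde)

private lemma foldl_fix {D : Type*} [PartialOrder D] :
    ∀ (L : List (D → D)), (∀ h ∈ L, ∀ x : D, x ≤ h x) →
      ∀ d : D, L.foldl (fun x h => h x) d = d → ∀ h ∈ L, h d = d := by
  intro L
  induction L with
  | nil => intro _ d _ h hh; simp at hh
  | cons h t ih =>
    intro hL d hfix h' hh'
    have hinfl_t : ∀ h'' ∈ t, ∀ x : D, x ≤ h'' x :=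
      fun h'' hh'' x => hL h'' (List.mem_cons_of_mem _ hh'') x
    simp only [List.foldl_cons] at hfix
    have h1 : d ≤ h d := hL h (List.mem_cons_self (a := h) (l := t)) d
    have h2 : h d ≤ t.foldl (fun x h => h x) (h d) := foldl_infl t hinfl_t (h d)
    have hhd : h d = d := le_antisymm (le_of_le_of_eq h2 hfix) h1
    rcases List.mem_cons.mp hh' with rfl | hh'
    · exact hhd
    · exact ih hinfl_t d (by rwa [hhd] at hfix) h' hh'

private lemma foldl_of_fix {D : Type*} [PartialOrder D] :
    ∀ (L : List (D → D)), ∀ d : D, (∀ h ∈ L, h d = d) →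
      L.foldl (fun x h => h x) d = d := by
  intro L
  induction L with
  | nil => intro d _; simp
  | cons h t ih =>
    intro d hd
    simp only [List.foldl_cons, hd h (List.mem_cons_self (a := h) (l := t))]
    exact ih d fun h' hh' => hd h' (List.mem_cons_of_mem _ hh')

/-- Iterating the composition `g := f_k ∘ ⋯ ∘ f₁` of inflationary monotonic functions
on a finite partial order starting from `⊥` reaches, after some `n` steps, a fixpoint
of `g` which is the least common fixpoint of the `fᵢ`. -/
theorem iterate_composition_least_common_fixpoint
    {D : Type*} [PartialOrder D] [Fintype D] [OrderBot D]
    (k : ℕ) (f : Fin k → D → D)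
    (hinf : ∀ i, ∀ x : D, x ≤ f i x)
    (hmono : ∀ i, ∀ x y : D, x ≤ y → f i x ≤ f i y)
    (g : D → D)
    (hg : ∀ d : D, g d = (List.ofFn f).foldl (fun x h => h x) d) :
    ∃ n : ℕ, g (g^[n] ⊥) = g^[n] ⊥ ∧
      (∀ i, f i (g^[n] ⊥) = g^[n] ⊥) ∧
      ∀ e : D, (∀ i, f i e = e) → g^[n] ⊥ ≤ e := by
  have hmemL : ∀ h ∈ List.ofFn f, (∀ x : D, x ≤ h x) ∧ (∀ x y : D, x ≤ y → h x ≤ h y) := by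
    intro h hh
    obtain ⟨i, rfl⟩ := List.mem_ofFn.mp hh
    exact ⟨hinf i, hmono i⟩
  have hginf : ∀ d : D, d ≤ g d := by
    intro d; rw [hg]; exact foldl_infl _ (fun h hh => (hmemL h hh).1) d
  have hgmono : ∀ d e : D, d ≤ e → g d ≤ g e := by
    intro d e hde; rw [hg, hg]
    exact foldl_mono _ (fun h hh => (hmemL h hh).2) d e hde
  -- eventual stabilization by pigeonhole
  have hmono_it : Monotone (fun n => g^[n] (⊥ : D)) := by
    apply monotone_nat_of_le_succ
    intro n
    rw [Function.iterate_succ_apply']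
    exact hginf _
  obtain ⟨m, n, hmn, heq⟩ := Finite.exists_ne_map_eq_of_infinite (fun n => g^[n] (⊥ : D))
  wlog hlt : m < n generalizing m n
  · exact this n m hmn.symm heq.symm (hmn.lt_or_gt.resolve_left hlt)
  have hfix : g (g^[m] ⊥) = g^[m] ⊥ := by
    rw [← Function.iterate_succ_apply' g m ⊥]
    exact le_antisymm (heq ▸ hmono_it hlt) (hmono_it (Nat.le_succ m))
  refine ⟨m, hfix, ?_, ?_⟩
  · intro i
    have := foldl_fix (List.ofFn f) (fun h hh => (hmemL h hh).1) (g^[m] ⊥)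
      (by rw [← hg]; exact hfix) (f i) (by simp [List.mem_ofFn])
    exact this
  · intro e he
    have hge : g e = e := by rw [hg]; exact foldl_of_fix _ e (by
      intro h hh
      obtain ⟨i, rfl⟩ := List.mem_ofFn.mp hh
      exact he i)
    have key : ∀ p, g^[p] ⊥ ≤ e := by
      intro p
      induction p with
      | zero => simp
      | succ q ih =>
        rw [Function.iterate_succ_apply' g q ⊥]
        calc g (g^[q] ⊥) ≤ g e := hgmono _ _ ih
          _ = e := hge
    exact key m
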